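/- Let X ∈ ℝ^{n×d} have linearly independent rows, θ₀, θ* ∈ ℝ^d, z ∈ ℝ^n, and Σ ∈ ℝ^{d×d} positive semidefinite. Define P∥ := Xᵀ(XXᵀ)⁻¹X, P⊥ := I − P∥, and θ_GD := P∥ θ* + P⊥ θ₀ + Xᵀ(XXᵀ)⁻¹ z. Then ‖Σ^{1/2}(θ* − θ_GD)‖₂² ≤ 2 ‖Σ − (1/n) XᵀX‖₂ · ‖θ* − θ₀‖₂² + 2 ‖Σ^{1/2} Xᵀ (X Xᵀ)⁻¹ z‖₂². -/

import Mathlib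

open Matrix

/-- Spectral norm (largest singular value) of a matrix, as the operator norm of the
induced linear map between Euclidean spaces. -/
noncomputable def specNorm {d₁ d₂ : ℕ} (M : Matrix (Fin d₁) (Fin d₂) ℝ) : ℝ :=
  ‖LinearMap.toContinuousLinearMap (Matrix.toEuclideanLin M)‖

open scoped ComplexOrder
/-- The positive semidefinite square root of a positive semidefinite matrix, as defined in the
older Mathlib (`Matrix.PosSemidef.sqrt`, since removed). -/
noncomputable def Matrix.PosSemidef.sqrt {n 𝕜 : Type*} [Fintype n] [RCLike 𝕜] [DecidableEq n]
    {A : Matrix n n 𝕜} (hA : A.PosSemidef) : Matrix n n 𝕜 :=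
  hA.1.eigenvectorUnitary.1 * diagonal ((↑) ∘ (√·) ∘ hA.1.eigenvalues) *
  (star hA.1.eigenvectorUnitary : Matrix n n 𝕜)

lemma Matrix.PosSemidef.sqrt_mul_self {n 𝕜 : Type*} [Fintype n] [RCLike 𝕜] [DecidableEq n]
    {A : Matrix n n 𝕜} (hA : A.PosSemidef) : hA.sqrt * hA.sqrt = A := by
  have hD : diagonal (((↑) ∘ (√·) ∘ hA.1.eigenvalues) : n → 𝕜) *
      diagonal ((↑) ∘ (√·) ∘ hA.1.eigenvalues) = diagonal (RCLike.ofReal ∘ hA.1.eigenvalues) := by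
    rw [diagonal_mul_diagonal]
    congr 1
    funext i
    simp only [Function.comp_apply]
    rw [← RCLike.ofReal_mul, Real.mul_self_sqrt (hA.eigenvalues_nonneg i)]
  conv_rhs => rw [hA.1.spectral_theorem, Unitary.conjStarAlgAut_apply]
  unfold Matrix.PosSemidef.sqrt
  rw [← hD]
  simp only [Matrix.mul_assoc]
  congr 2
  rw [← Matrix.mul_assoc (star _ : Matrix n n 𝕜), Unitary.coe_star_mul_self, Matrix.one_mul]

lemma Matrix.PosSemidef.sqrt_isHermitian {n 𝕜 : Type*} [Fintype n] [RCLike 𝕜] [DecidableEq n]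
    {A : Matrix n n 𝕜} (hA : A.PosSemidef) : hA.sqrt.IsHermitian := by
  unfold Matrix.PosSemidef.sqrt Matrix.IsHermitian
  rw [conjTranspose_mul, conjTranspose_mul, diagonal_conjTranspose, Matrix.mul_assoc]
  congr 2
  · rw [← Matrix.star_eq_conjTranspose, star_star]
  · congr 1
    funext i
    simp [RCLike.star_def]

lemma dot_mulVec_le_specNorm {d : ℕ} (M : Matrix (Fin d) (Fin d) ℝ) (u : Fin d → ℝ) :
    u ⬝ᵥ (M *ᵥ u) ≤ specNorm M * (u ⬝ᵥ u) := by
  set U : EuclideanSpace ℝ (Fin d) := (WithLp.equiv 2 _).symm u with hU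
  set T := LinearMap.toContinuousLinearMap (Matrix.toEuclideanLin M) with hT
  have h1 : u ⬝ᵥ (M *ᵥ u) = inner ℝ U (T U) := by
    have : T U = (WithLp.equiv 2 (Fin d → ℝ)).symm (M *ᵥ u) := by
      simp [hT, hU, Matrix.toEuclideanLin_apply]
    rw [this]
    simp only [PiLp.inner_apply, dotProduct, hU, WithLp.equiv, RCLike.inner_apply,
      conj_trivial, Equiv.refl_symm, Equiv.refl_apply]
    exact Finset.sum_congr rfl fun i _ => mul_comm _ _
  have h2 : (u ⬝ᵥ u : ℝ) = ‖U‖ * ‖U‖ := by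
    have : (u ⬝ᵥ u : ℝ) = inner ℝ U U := by
      simp only [PiLp.inner_apply, dotProduct, hU, WithLp.equiv, RCLike.inner_apply,
        conj_trivial, Equiv.refl_symm, Equiv.refl_apply]
      rfl
    rw [this, real_inner_self_eq_norm_mul_norm]
  rw [h1, h2]
  calc inner ℝ U (T U) ≤ ‖U‖ * ‖T U‖ := real_inner_le_norm U (T U)
    _ ≤ ‖U‖ * (‖T‖ * ‖U‖) := by
        exact mul_le_mul_of_nonneg_left (T.le_opNorm U) (norm_nonneg _)
    _ = specNorm M * (‖U‖ * ‖U‖) := by rw [specNorm, ← hT]; ring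

/-- excess-risk decomposition for the gradient descent limit
`θ_GD = P∥θ* + P⊥θ₀ + Xᵀ(XXᵀ)⁻¹z` of over-parameterized least squares:
`‖Σ^{1/2}(θ* − θ_GD)‖₂² ≤ 2‖Σ − (1/n)XᵀX‖₂ ‖θ* − θ₀‖₂² + 2‖Σ^{1/2}Xᵀ(XXᵀ)⁻¹z‖₂²`. -/
theorem stmt6 {n d : ℕ} (X : Matrix (Fin n) (Fin d) ℝ)
    (hX : LinearIndependent ℝ (fun i => X i))
    (θ₀ θs : Fin d → ℝ) (z : Fin n → ℝ)
    (S : Matrix (Fin d) (Fin d) ℝ) (hS : S.PosSemidef)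
    (Ppar Pperp : Matrix (Fin d) (Fin d) ℝ)
    (hPpar : Ppar = Xᵀ * (X * Xᵀ)⁻¹ * X) (hPperp : Pperp = 1 - Ppar)
    (θGD : Fin d → ℝ)
    (hθGD : θGD = Ppar *ᵥ θs + Pperp *ᵥ θ₀ + (Xᵀ * (X * Xᵀ)⁻¹) *ᵥ z) :
    ∑ i, ((hS.sqrt *ᵥ (θs - θGD)) i) ^ 2 ≤
      2 * specNorm (S - (n : ℝ)⁻¹ • (Xᵀ * X)) * ∑ i, (θs i - θ₀ i) ^ 2
        + 2 * ∑ i, ((hS.sqrt *ᵥ ((Xᵀ * (X * Xᵀ)⁻¹) *ᵥ z)) i) ^ 2 := by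
  classical
  -- invertibility of X * Xᵀ
  have hker : ∀ v : Fin n → ℝ, (X * Xᵀ) *ᵥ v = 0 → v = 0 := by
    intro v hv
    have h0 : v ⬝ᵥ ((X * Xᵀ) *ᵥ v) = 0 := by rw [hv, dotProduct_zero]
    rw [dotProduct_mulVec, ← vecMul_vecMul, ← dotProduct_mulVec,
      ← vecMul_transpose, transpose_transpose] at h0
    have hvX : v ᵥ* X = 0 := dotProduct_self_eq_zero.mp h0
    have := Fintype.linearIndependent_iff.mp hX v
    have hsum : ∑ i, v i • X i = 0 := by
      funext j
      simpa [Finset.sum_apply, vecMul, dotProduct] using congrFun hvX j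
    funext i
    simpa using this hsum i
  have hUnit : IsUnit (X * Xᵀ) := by
    rw [← Matrix.mulVec_injective_iff_isUnit]
    intro a b hab
    have : (X * Xᵀ) *ᵥ (a - b) = 0 := by
      rw [mulVec_sub, hab, sub_self]
    have := hker _ this
    exact sub_eq_zero.mp this
  have hdet : IsUnit (X * Xᵀ).det := (Matrix.isUnit_iff_isUnit_det _).mp hUnit
  have hA1 : (X * Xᵀ) * (X * Xᵀ)⁻¹ = 1 := Matrix.mul_nonsing_inv _ hdet
  have hA2 : (X * Xᵀ)⁻¹ * (X * Xᵀ) = 1 := Matrix.nonsing_inv_mul _ hdet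
  have hinvT : ((X * Xᵀ)⁻¹)ᵀ = (X * Xᵀ)⁻¹ := by
    rw [Matrix.transpose_nonsing_inv, transpose_mul, transpose_transpose]
  -- projection identities
  have hPparT : Pparᵀ = Ppar := by
    rw [hPpar, transpose_mul, transpose_mul, hinvT, transpose_transpose, ← Matrix.mul_assoc]
  have hPparPpar : Ppar * Ppar = Ppar := by
    rw [hPpar]
    have h : (X * Xᵀ)⁻¹ * (X * Xᵀ) * ((X * Xᵀ)⁻¹ * X) = (X * Xᵀ)⁻¹ * X := by
      rw [hA2, Matrix.one_mul]
    calc Xᵀ * (X * Xᵀ)⁻¹ * X * (Xᵀ * (X * Xᵀ)⁻¹ * X)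
        = Xᵀ * ((X * Xᵀ)⁻¹ * (X * Xᵀ) * ((X * Xᵀ)⁻¹ * X)) := by
          simp only [Matrix.mul_assoc]
      _ = Xᵀ * ((X * Xᵀ)⁻¹ * X) := by rw [h]
      _ = Xᵀ * (X * Xᵀ)⁻¹ * X := by rw [Matrix.mul_assoc]
  have hXPperp : X * Pperp = 0 := by
    rw [hPperp, hPpar, Matrix.mul_sub, Matrix.mul_one]
    have : X * (Xᵀ * (X * Xᵀ)⁻¹ * X) = (X * Xᵀ) * (X * Xᵀ)⁻¹ * X := by
      simp only [Matrix.mul_assoc]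
    rw [this, hA1, Matrix.one_mul, sub_self]
  have hPperpT : Pperpᵀ = Pperp := by
    rw [hPperp, transpose_sub, transpose_one, hPparT]
  -- vectors
  set w : Fin d → ℝ := θs - θ₀ with hw
  set u : Fin d → ℝ := Pperp *ᵥ w with hu
  set b : Fin d → ℝ := hS.sqrt *ᵥ ((Xᵀ * (X * Xᵀ)⁻¹) *ᵥ z) with hb
  set a : Fin d → ℝ := hS.sqrt *ᵥ u with ha
  have hdiff : θs - θGD = u - (Xᵀ * (X * Xᵀ)⁻¹) *ᵥ z := by
    rw [hθGD, hu, hw, hPperp]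
    simp only [Matrix.sub_mulVec, Matrix.one_mulVec, Matrix.mulVec_sub]
    abel
  have hab : hS.sqrt *ᵥ (θs - θGD) = a - b := by
    rw [hdiff, Matrix.mulVec_sub, ha, hb]
  -- pointwise 2-squares bound
  have step1 : ∑ i, ((hS.sqrt *ᵥ (θs - θGD)) i) ^ 2 ≤
      2 * ∑ i, (a i) ^ 2 + 2 * ∑ i, (b i) ^ 2 := by
    rw [hab, Finset.mul_sum, Finset.mul_sum, ← Finset.sum_add_distrib]
    apply Finset.sum_le_sum
    intro i _
    have : (a - b) i = a i - b i := rfl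
    rw [this]
    nlinarith [sq_nonneg (a i + b i)]
  -- ∑ a² = u ⬝ᵥ (S *ᵥ u)
  have hsqrtT : hS.sqrtᵀ = hS.sqrt := by
    have := hS.sqrt_isHermitian
    rwa [Matrix.IsHermitian, Matrix.conjTranspose_eq_transpose_of_trivial] at this
  have hsum_a : ∑ i, (a i) ^ 2 = u ⬝ᵥ (S *ᵥ u) := by
    have h1 : ∑ i, (a i) ^ 2 = a ⬝ᵥ a := by
      simp [dotProduct, sq]
    rw [h1, ha, dotProduct_mulVec, ← Matrix.mulVec_transpose, hsqrtT,
      Matrix.mulVec_mulVec, hS.sqrt_mul_self, dotProduct_comm]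
  -- S *ᵥ u = M *ᵥ u
  set M : Matrix (Fin d) (Fin d) ℝ := S - (n : ℝ)⁻¹ • (Xᵀ * X) with hM
  have hXu : X *ᵥ u = 0 := by
    rw [hu, Matrix.mulVec_mulVec, hXPperp, Matrix.zero_mulVec]
  have hMu : M *ᵥ u = S *ᵥ u := by
    rw [hM, Matrix.sub_mulVec, Matrix.smul_mulVec,
      ← Matrix.mulVec_mulVec, hXu, Matrix.mulVec_zero, smul_zero, sub_zero]
  -- u ⬝ᵥ u ≤ w ⬝ᵥ w
  have huw : u ⬝ᵥ u ≤ w ⬝ᵥ w := by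
    set p : Fin d → ℝ := Ppar *ᵥ w with hp
    have hwpu : w = p + u := by
      rw [hp, hu, hPperp, Matrix.sub_mulVec, Matrix.one_mulVec]
      abel
    have hcross : p ⬝ᵥ u = 0 := by
      rw [hp, hu, dotProduct_mulVec, ← Matrix.mulVec_transpose, hPperpT,
        Matrix.mulVec_mulVec]
      have : Pperp * Ppar = 0 := by
        rw [hPperp, sub_mul, one_mul, hPparPpar, sub_self]
      rw [this, Matrix.zero_mulVec, zero_dotProduct]
    have hcross' : u ⬝ᵥ p = 0 := by rwa [dotProduct_comm]
    have hpp : 0 ≤ p ⬝ᵥ p := by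
      simp only [dotProduct]
      exact Finset.sum_nonneg fun i _ => mul_self_nonneg _
    calc u ⬝ᵥ u ≤ p ⬝ᵥ p + u ⬝ᵥ u := le_add_of_nonneg_left hpp
      _ = w ⬝ᵥ w := by
          rw [hwpu, add_dotProduct, dotProduct_add, dotProduct_add, hcross, hcross']
          ring
  -- combine
  have step2 : ∑ i, (a i) ^ 2 ≤ specNorm M * (w ⬝ᵥ w) := by
    rw [hsum_a, ← hMu]
    calc u ⬝ᵥ (M *ᵥ u) ≤ specNorm M * (u ⬝ᵥ u) := dot_mulVec_le_specNorm M u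
      _ ≤ specNorm M * (w ⬝ᵥ w) :=
          mul_le_mul_of_nonneg_left huw (norm_nonneg _)
  have hww : w ⬝ᵥ w = ∑ i, (θs i - θ₀ i) ^ 2 := by
    simp [dotProduct, hw, sq]
  calc ∑ i, ((hS.sqrt *ᵥ (θs - θGD)) i) ^ 2
      ≤ 2 * ∑ i, (a i) ^ 2 + 2 * ∑ i, (b i) ^ 2 := step1
    _ ≤ 2 * (specNorm M * (w ⬝ᵥ w)) + 2 * ∑ i, (b i) ^ 2 := by
        have := step2; linarith
    _ = 2 * specNorm M * ∑ i, (θs i - θ₀ i) ^ 2 + 2 * ∑ i, (b i) ^ 2 := by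
        rw [hww]; ring
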